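/- Let m ≥ 1, n = N − l ≥ 1, and k = m − l. The set of pairs consisting of a path ν ∈ P_{k,n} (an admissible path from (0,n) to (k,0) whose east steps occur one each on lines y = j for j in a chosen (k−1)-subset of [n−1], plus a final east step at y = 0) together with a vector r ∈ N^n with |r| = l, is in bijection with the set of pairs (s, I) with s ∈ N^m, |s| = n−k, and I ⊆ {2,…,m}, |I| = l: both sets index admissible paths γ from (0,n) to (m,0) together with a choice of k−1 east-south corners, recorded either by their y-coordinates (a (k−1)-subset of [n−1] of lines containing an east step) or by their x-coordinates (a set of k−1 values i ∈ [m−1] at which γ has a south step on the line x = i). Moreover Σ_{s ∈ N^m, |s|=n−k} Σ_{I ⊆ [2,m], |I|=l} x^{s + (1^m) − ε_I} = x_1 x_2 ⋯ x_m · h_{n−k}(x_1,…,x_m) · e_l(x_2^{−1},…,x_m^{−1}). -/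

import Mathlib

/-- The paths `ν ∈ P_{k,n}` together with a vector `r ∈ ℕⁿ`, `|r| = l`.  A path in
`P_{k,n}` is encoded by its horizontal-run vector: run `1` at height `0` (final east
step), runs in `{0,1}` at the heights `1,…,n−1` with exactly `k−1` ones. -/
def pathVecPairs (n k l : ℕ) : Set ((Fin n → ℕ) × (Fin n → ℕ)) :=
  {p | (∀ y : Fin n, (y : ℕ) = 0 → p.1 y = 1) ∧ (∀ y : Fin n, (y : ℕ) ≠ 0 → p.1 y ≤ 1) ∧
    (∑ y ∈ Finset.univ.filter (fun y : Fin n => (y : ℕ) ≠ 0), p.1 y) = k - 1 ∧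
    (∑ y, p.2 y) = l}

/-- Pairs `(s, I)` with `s ∈ ℕ^m`, `|s| = n−k`, and `I ⊆ [2,m]`, `|I| = l`
(coordinates indexed by `Fin m`, with `i = 0` corresponding to `1 ∈ [m]`). -/
def vecSubsetPairs (m n k l : ℕ) : Set ((Fin m → ℕ) × Finset (Fin m)) :=
  {p | (∑ i, p.1 i) = n - k ∧ (∀ i ∈ p.2, (i : ℕ) ≠ 0) ∧ p.2.card = l}


open Finset

section Aux

lemma card_filter_val_lt (N v : ℕ) (h : v ≤ N) :
    (univ.filter fun y : Fin N => (y : ℕ) < v).card = v := by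
  rcases eq_or_lt_of_le h with rfl | h
  · rw [filter_true_of_mem (fun y _ => y.isLt), card_univ, Fintype.card_fin]
  · have : (univ.filter fun y : Fin N => (y : ℕ) < v) = Finset.Iio ⟨v, h⟩ := by
      ext y; simp [Fin.lt_def]
    rw [this, Fin.card_Iio]

lemma mem_downset_iff {N : ℕ} (S : Finset (Fin N))
    (hS : ∀ a b : Fin N, a ≤ b → b ∈ S → a ∈ S) (y : Fin N) :
    y ∈ S ↔ (y : ℕ) < S.card := by
  constructor
  · intro hy
    have h1 : Finset.Iic y ⊆ S := fun a ha => hS a y (Finset.mem_Iic.mp ha) hy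
    have := Finset.card_le_card h1
    rw [Fin.card_Iic] at this; omega
  · intro hy
    by_contra hns
    have h1 : S ⊆ Finset.Iio y := by
      intro a ha
      rw [Finset.mem_Iio]
      rcases lt_or_ge a y with h | h
      · exact h
      · exact absurd (hS y a h ha) hns
    have := Finset.card_le_card h1
    rw [Fin.card_Iio] at this; omega

lemma card_filter_Ico (N A B : ℕ) (hB : B ≤ N) :
    (univ.filter fun y : Fin N => A ≤ (y : ℕ) ∧ (y : ℕ) < B).card = B - A := by
  rcases le_or_gt A B with hAB | hAB
  · have h1 : (univ.filter fun y : Fin N => A ≤ (y : ℕ) ∧ (y : ℕ) < B) =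
        (univ.filter fun y : Fin N => (y : ℕ) < B) \ (univ.filter fun y : Fin N => (y : ℕ) < A) := by
      ext y; simp; omega
    rw [h1, card_sdiff_of_subset (by intro y; simp; omega), card_filter_val_lt N B hB,
      card_filter_val_lt N A (le_trans hAB hB)]
  · have h1 : (univ.filter fun y : Fin N => A ≤ (y : ℕ) ∧ (y : ℕ) < B) = ∅ := by
      ext y; simp; omega
    rw [h1]; simp; omega

/-- `Fsum c j = ∑_{t ≥ j} c t`. -/
def Fsum {N : ℕ} (c : Fin N → ℕ) (j : ℕ) : ℕ :=
  ∑ t ∈ univ.filter (fun t : Fin N => j ≤ (t : ℕ)), c t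

lemma Fsum_zero {N : ℕ} (c : Fin N → ℕ) : Fsum c 0 = ∑ t, c t := by
  unfold Fsum; rw [filter_true_of_mem (fun y _ => Nat.zero_le _)]

lemma Fsum_of_ge {N : ℕ} (c : Fin N → ℕ) {j : ℕ} (h : N ≤ j) : Fsum c j = 0 := by
  unfold Fsum
  rw [filter_false_of_mem, sum_empty]
  intro t _; omega

lemma Fsum_succ {N : ℕ} (c : Fin N → ℕ) (y : Fin N) :
    Fsum c (y : ℕ) = c y + Fsum c ((y : ℕ) + 1) := by
  unfold Fsum
  have h1 : (univ.filter fun t : Fin N => (y : ℕ) ≤ (t : ℕ)) =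
      insert y (univ.filter fun t : Fin N => (y : ℕ) + 1 ≤ (t : ℕ)) := by
    ext t
    simp only [mem_filter, mem_univ, true_and, mem_insert]
    constructor
    · intro h; rcases eq_or_lt_of_le h with h | h
      · left; exact Fin.ext h.symm
      · right; omega
    · rintro (rfl | h) <;> omega
  rw [h1, sum_insert (by simp)]

lemma Fsum_anti {N : ℕ} (c : Fin N → ℕ) {j j' : ℕ} (h : j ≤ j') : Fsum c j' ≤ Fsum c j := by
  apply Finset.sum_le_sum_of_subset
  intro t; simp only [mem_filter, mem_univ, true_and]; omega

lemma Fsum_le_zero' {N : ℕ} (c : Fin N → ℕ) (j : ℕ) : Fsum c j ≤ Fsum c 0 :=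
  Fsum_anti c (Nat.zero_le j)

/-- number of `y` with `Fsum c (y+1) = i` -/
def cnt {N : ℕ} (M : ℕ) (c : Fin N → ℕ) (i : Fin M) : ℕ :=
  (univ.filter fun y : Fin N => Fsum c ((y : ℕ) + 1) = (i : ℕ)).card

/-- partial sums of `cnt` count the `y` with large `Fsum`. -/
lemma Fsum_cnt {N M : ℕ} (c : Fin N → ℕ) (hFM : ∀ y : Fin N, Fsum c ((y : ℕ) + 1) < M)
    (j : ℕ) :
    Fsum (cnt M c) j = (univ.filter fun y : Fin N => j ≤ Fsum c ((y : ℕ) + 1)).card := by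
  have h0 : Fsum (cnt M c) j = ∑ i ∈ univ.filter (fun i : Fin M => j ≤ (i : ℕ)), cnt M c i := rfl
  rw [h0, Finset.card_eq_sum_card_fiberwise
    (f := fun y : Fin N => (⟨Fsum c ((y : ℕ) + 1), hFM y⟩ : Fin M))
    (t := univ.filter fun i : Fin M => j ≤ (i : ℕ))]
  · apply Finset.sum_congr rfl
    intro i hi
    simp only [mem_filter, mem_univ, true_and] at hi
    unfold cnt
    congr 1
    ext y
    simp only [mem_filter, mem_univ, true_and, Fin.ext_iff]
    exact ⟨fun h => ⟨by omega, h⟩, fun h => h.2⟩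
  · intro y hy
    simp only [coe_filter, Set.mem_setOf_eq, mem_filter, mem_univ, true_and] at hy ⊢
    exact hy

lemma sum_cnt {N M : ℕ} (c : Fin N → ℕ) (hFM : ∀ y : Fin N, Fsum c ((y : ℕ) + 1) < M) :
    ∑ i, cnt M c i = N := by
  have := Fsum_cnt c hFM 0
  rw [Fsum_zero] at this
  rw [this, filter_true_of_mem (fun y _ => Nat.zero_le _), card_univ, Fintype.card_fin]

/-- reconstruction of the (vertical-run profile) from fibre counts -/
def Hval {M : ℕ} (count : Fin M → ℕ) (j : ℕ) : ℕ :=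
  (univ.filter fun i : Fin M => j ≤ Fsum count ((i : ℕ) + 1)).card

lemma Hval_anti {M : ℕ} (count : Fin M → ℕ) {j j' : ℕ} (h : j ≤ j') :
    Hval count j' ≤ Hval count j := by
  apply Finset.card_le_card
  intro i; simp only [mem_filter, mem_univ, true_and]; intro hi; omega

end Aux

section Main
variable {N M : ℕ}

lemma Hval_zero (count : Fin M → ℕ) : Hval count 0 = M := by
  unfold Hval
  rw [filter_true_of_mem (fun i _ => Nat.zero_le _), card_univ, Fintype.card_fin]

lemma Hval_of_ge (count : Fin M → ℕ) (hM : 0 < M) (htot : Fsum count 0 = N)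
    (hc0 : 1 ≤ count ⟨0, hM⟩) {j : ℕ} (hj : N ≤ j) : Hval count j = 0 := by
  have h1 : Fsum count (0 : ℕ) = count ⟨0, hM⟩ + Fsum count 1 := Fsum_succ count ⟨0, hM⟩
  unfold Hval
  rw [filter_false_of_mem, card_empty]
  intro i _
  have h2 : Fsum count ((i : ℕ) + 1) ≤ Fsum count 1 := Fsum_anti count (by omega)
  omega

/-- Lemma A : reconstruction from the fibre counts of a profile gives back the profile. -/
lemma Hval_cnt (c : Fin N → ℕ) (hFM : ∀ y : Fin N, Fsum c ((y : ℕ) + 1) < M)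
    (htot : Fsum c 0 = M) {j : ℕ} (hj : j ≤ N) : Hval (cnt M c) j = Fsum c j := by
  have hrw : ∀ i : Fin M, Fsum (cnt M c) ((i : ℕ) + 1) =
      (univ.filter fun y : Fin N => (i : ℕ) + 1 ≤ Fsum c ((y : ℕ) + 1)).card :=
    fun i => Fsum_cnt c hFM _
  unfold Hval
  rcases Nat.eq_zero_or_pos j with rfl | hj1
  · rw [filter_true_of_mem (fun i _ => Nat.zero_le _), card_univ, Fintype.card_fin, htot]
  · have hN : 0 < N := by omega
    set y0 : Fin N := ⟨j - 1, by omega⟩ with hy0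
    have key : ∀ i : Fin M, (j ≤ Fsum (cnt M c) ((i : ℕ) + 1)) ↔ (i : ℕ) < Fsum c j := by
      intro i
      rw [hrw i]
      have hds := mem_downset_iff (univ.filter fun y : Fin N => (i : ℕ) + 1 ≤ Fsum c ((y : ℕ) + 1))
        (by
          intro a b hab hb
          simp only [mem_filter, mem_univ, true_and] at hb ⊢
          exact le_trans hb (Fsum_anti c (by omega))) y0
      simp only [mem_filter, mem_univ, true_and, Fin.val_mk] at hds
      have hj1' : (j - 1) + 1 = j := by omega
      rw [hj1'] at hds
      have hy0v : (y0 : ℕ) = j - 1 := rfl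
      omega
    have hfil : (univ.filter fun i : Fin M => j ≤ Fsum (cnt M c) ((i : ℕ) + 1)) =
        (univ.filter fun i : Fin M => (i : ℕ) < Fsum c j) := by
      ext i; simp only [mem_filter, mem_univ, true_and]; exact key i
    rw [hfil, card_filter_val_lt]
    have h2 := hFM ⟨0, hN⟩
    norm_num at h2
    have h4 : Fsum c j ≤ Fsum c 1 := Fsum_anti c (by omega)
    omega

/-- the profile reconstructed from counts -/
def cVec {M : ℕ} (N : ℕ) (count : Fin M → ℕ) (y : Fin N) : ℕ :=
  Hval count (y : ℕ) - Hval count ((y : ℕ) + 1)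

/-- Lemma B1 : the reconstructed profile has partial sums `Hval`. -/
lemma Fsum_cVec (count : Fin M → ℕ) (hM : 0 < M) (htot : Fsum count 0 = N)
    (hc0 : 1 ≤ count ⟨0, hM⟩) : ∀ j : ℕ, j ≤ N → Fsum (cVec N count) j = Hval count j := by
  have key : ∀ d j : ℕ, j ≤ N → N - j = d → Fsum (cVec N count) j = Hval count j := by
    intro d
    induction d with
    | zero =>
      intro j hj hd
      have : j = N := by omega
      subst this
      rw [Fsum_of_ge _ (le_refl _), Hval_of_ge count hM htot hc0 (le_refl _)]
    | succ d ih =>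
      intro j hj hd
      have hjN : j < N := by omega
      have h1 : Fsum (cVec N count) ((⟨j, hjN⟩ : Fin N) : ℕ) =
          cVec N count ⟨j, hjN⟩ + Fsum (cVec N count) (((⟨j, hjN⟩ : Fin N) : ℕ) + 1) :=
        Fsum_succ _ _
      simp only at h1
      rw [h1, ih (j + 1) (by omega) (by omega)]
      unfold cVec
      simp only
      have := Hval_anti count (show j ≤ j + 1 by omega)
      omega
  intro j hj
  exact key (N - j) j hj rfl

/-- Lemma B2 : fibre counts of the reconstructed profile give back the counts. -/
lemma cnt_cVec (count : Fin M → ℕ) (hM : 0 < M) (htot : Fsum count 0 = N)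
    (hc0 : 1 ≤ count ⟨0, hM⟩) : cnt M (cVec N count) = count := by
  funext i
  have hF : ∀ y : Fin N, Fsum (cVec N count) ((y : ℕ) + 1) = Hval count ((y : ℕ) + 1) :=
    fun y => Fsum_cVec count hM htot hc0 _ (by omega)
  have hchar : ∀ y : Fin N, (Hval count ((y : ℕ) + 1) = (i : ℕ)) ↔
      (Fsum count ((i : ℕ) + 1) ≤ (y : ℕ) ∧ (y : ℕ) < Fsum count (i : ℕ)) := by
    intro y
    have hds := mem_downset_iff
      (univ.filter fun i' : Fin M => (y : ℕ) + 1 ≤ Fsum count ((i' : ℕ) + 1))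
      (by
        intro a b hab hb
        simp only [mem_filter, mem_univ, true_and] at hb ⊢
        exact le_trans hb (Fsum_anti count (by omega)))
    have hcard : (univ.filter fun i' : Fin M =>
        (y : ℕ) + 1 ≤ Fsum count ((i' : ℕ) + 1)).card = Hval count ((y : ℕ) + 1) := rfl
    constructor
    · intro hH
      constructor
      · have := hds i
        simp only [mem_filter, mem_univ, true_and, hcard, hH] at this
        omega
      · rcases Nat.eq_zero_or_pos (i : ℕ) with h0 | h0
        · have := y.isLt
          rw [h0]
          rw [Fsum_zero, ← Fsum_zero count, htot] at *
          omega
        · have := hds ⟨(i : ℕ) - 1, by omega⟩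
          simp only [mem_filter, mem_univ, true_and, hcard, hH] at this
          have h2 : ((i : ℕ) - 1) + 1 = (i : ℕ) := by omega
          rw [h2] at this
          omega
    · rintro ⟨h1, h2⟩
      rw [← hcard]
      have hfil : (univ.filter fun i' : Fin M =>
          (y : ℕ) + 1 ≤ Fsum count ((i' : ℕ) + 1)) =
          (univ.filter fun i' : Fin M => (i' : ℕ) < (i : ℕ)) := by
        ext i'
        simp only [mem_filter, mem_univ, true_and]
        constructor
        · intro h
          by_contra hc
          push_neg at hc
          have : Fsum count ((i' : ℕ) + 1) ≤ Fsum count ((i : ℕ) + 1) :=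
            Fsum_anti count (by omega)
          omega
        · intro h
          have : Fsum count (i : ℕ) ≤ Fsum count ((i' : ℕ) + 1) :=
            Fsum_anti count (by omega)
          omega
      rw [hfil, card_filter_val_lt _ _ (le_of_lt i.isLt)]
  have : cnt M (cVec N count) i =
      (univ.filter fun y : Fin N =>
        Fsum count ((i : ℕ) + 1) ≤ (y : ℕ) ∧ (y : ℕ) < Fsum count (i : ℕ)).card := by
    unfold cnt
    congr 1
    ext y
    simp only [mem_filter, mem_univ, true_and, hF y, hchar y]
  rw [this, card_filter_Ico]
  · have h1 : Fsum count ((i : ℕ)) = count i + Fsum count ((i : ℕ) + 1) := by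
      have := Fsum_succ count i
      omega
    omega
  · rw [← htot]
    exact Fsum_anti count (Nat.zero_le _)
end Main

section Extra
variable {N : ℕ}

/-- strict antitonicity at positive entries -/
lemma Fsum_inj (c : Fin N → ℕ) {y y' : Fin N} (hy : 1 ≤ c y) (hy' : 1 ≤ c y')
    (h : Fsum c (y : ℕ) = Fsum c (y' : ℕ)) : y = y' := by
  rcases lt_trichotomy y y' with hlt | heq | hlt
  · exfalso
    have h1 := Fsum_succ c y
    have h2 : Fsum c ((y : ℕ) + 1) ≥ Fsum c (y' : ℕ) := Fsum_anti c (by exact hlt)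
    omega
  · exact heq
  · exfalso
    have h1 := Fsum_succ c y'
    have h2 : Fsum c ((y' : ℕ) + 1) ≥ Fsum c (y : ℕ) := Fsum_anti c (by exact hlt)
    omega

/-- an attained positive value of the profile is a potential corner -/
lemma attained_exists (c : Fin N → ℕ) {v : ℕ} (hv : v ≠ 0)
    (h : ∃ y : Fin N, Fsum c ((y : ℕ) + 1) = v) :
    ∃ y : Fin N, (y : ℕ) ≠ 0 ∧ 1 ≤ c y ∧ Fsum c (y : ℕ) = v := by
  obtain ⟨y₀', hy₀'⟩ := h
  set S : Finset (Fin N) := univ.filter (fun y : Fin N => Fsum c ((y : ℕ) + 1) = v) with hS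
  have hSne : S.Nonempty := ⟨y₀', by simp [hS, hy₀']⟩
  set y₀ := S.max' hSne with hy₀def
  have hy₀ : Fsum c ((y₀ : ℕ) + 1) = v := by
    have := S.max'_mem hSne
    simp only [hS, mem_filter, mem_univ, true_and] at this
    exact this
  have hlast : (y₀ : ℕ) + 1 < N := by
    rcases Nat.lt_or_ge ((y₀ : ℕ) + 1) N with h | h
    · exact h
    · exfalso
      have : Fsum c ((y₀ : ℕ) + 1) = 0 := Fsum_of_ge c h
      omega
  refine ⟨⟨(y₀ : ℕ) + 1, hlast⟩, by simp, ?_, ?_⟩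
  · have h1 := Fsum_succ c ⟨(y₀ : ℕ) + 1, hlast⟩
    simp only at h1
    have h2 : Fsum c ((y₀ : ℕ) + 1 + 1) ≤ v := by
      rw [← hy₀]; exact Fsum_anti c (by omega)
    have h3 : Fsum c ((y₀ : ℕ) + 1 + 1) ≠ v := by
      intro hcon
      have hmem : (⟨(y₀ : ℕ) + 1, hlast⟩ : Fin N) ∈ S := by
        simp only [hS, mem_filter, mem_univ, true_and]
        exact hcon
      have := S.le_max' _ hmem
      rw [← hy₀def] at this
      have : (y₀ : ℕ) + 1 ≤ (y₀ : ℕ) := this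
      omega
    omega
  · simp only
    exact hy₀

/-- every value attained at `y ≥ 1` as `Fsum c y` is attained as `Fsum c (y'+1)` -/
lemma attained_shift (c : Fin N → ℕ) {y : Fin N} (hy : (y : ℕ) ≠ 0) :
    ∃ y' : Fin N, Fsum c ((y' : ℕ) + 1) = Fsum c (y : ℕ) := by
  refine ⟨⟨(y : ℕ) - 1, by omega⟩, ?_⟩
  congr 1
  simp only
  omega

end Extra

section BijDefs
open Finset

def cOfp (n : ℕ) (p : (Fin n → ℕ) × (Fin n → ℕ)) : Fin n → ℕ := fun y => p.1 y + p.2 y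

def marksOf (n : ℕ) (p : (Fin n → ℕ) × (Fin n → ℕ)) : Finset ℕ :=
  (univ.filter fun y : Fin n => (y : ℕ) ≠ 0 ∧ p.1 y = 1).image fun y : Fin n => Fsum (cOfp n p) y.val

def IOf (m n : ℕ) (p : (Fin n → ℕ) × (Fin n → ℕ)) : Finset (Fin m) :=
  univ.filter fun i : Fin m => (i : ℕ) ≠ 0 ∧ (i : ℕ) ∉ marksOf n p

def sOf (m n : ℕ) (p : (Fin n → ℕ) × (Fin n → ℕ)) : Fin m → ℕ :=
  fun i => cnt m (cOfp n p) i - (if i ∈ IOf m n p then 0 else 1)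

def countOf (m : ℕ) (q : (Fin m → ℕ) × Finset (Fin m)) : Fin m → ℕ :=
  fun i => q.1 i + (if i ∈ q.2 then 0 else 1)

def cInv (m n : ℕ) (q : (Fin m → ℕ) × Finset (Fin m)) : Fin n → ℕ := cVec n (countOf m q)

def aInv (m n : ℕ) (q : (Fin m → ℕ) × Finset (Fin m)) : Fin n → ℕ := fun y =>
  if (y : ℕ) = 0 then 1 else
    if 0 < cInv m n q y ∧ ∀ i ∈ q.2, (i : ℕ) ≠ Hval (countOf m q) (y : ℕ) then 1 else 0

def rInv (m n : ℕ) (q : (Fin m → ℕ) × Finset (Fin m)) : Fin n → ℕ :=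
  fun y => cInv m n q y - aInv m n q y

variable {m n k l : ℕ}

lemma sum_a {p : (Fin n → ℕ) × (Fin n → ℕ)} (hn : 1 ≤ n)
    (hp : p ∈ pathVecPairs n k l) (hk1 : 1 ≤ k) : ∑ y, p.1 y = k := by
  obtain ⟨h1, _, h3, _⟩ := hp
  have hsplit := Finset.sum_filter_add_sum_filter_not univ (fun y : Fin n => (y : ℕ) ≠ 0) p.1
  have h4 : (univ.filter fun y : Fin n => ¬ (y : ℕ) ≠ 0) = {⟨0, hn⟩} := by
    ext y
    simp only [mem_filter, mem_univ, true_and, mem_singleton, not_not, Fin.ext_iff]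
  rw [h4, Finset.sum_singleton, h1 ⟨0, hn⟩ rfl, h3] at hsplit
  omega

lemma path_facts (hm : 1 ≤ m) (hn : 1 ≤ n) (hl : l < m) (hk : k = m - l)
    {p : (Fin n → ℕ) × (Fin n → ℕ)} (hp : p ∈ pathVecPairs n k l) :
    Fsum (cOfp n p) 0 = m ∧ 1 ≤ cOfp n p ⟨0, hn⟩ ∧
      (∀ y : Fin n, Fsum (cOfp n p) ((y : ℕ) + 1) < m) := by
  obtain ⟨h1, h2, h3, h4⟩ := hp
  have hk1 : 1 ≤ k := by omega
  have htot : Fsum (cOfp n p) 0 = m := by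
    rw [Fsum_zero]
    unfold cOfp
    rw [Finset.sum_add_distrib, sum_a hn ⟨h1, h2, h3, h4⟩ hk1, h4]
    omega
  have hc0 : 1 ≤ cOfp n p ⟨0, hn⟩ := by
    unfold cOfp
    have := h1 ⟨0, hn⟩ rfl
    omega
  refine ⟨htot, hc0, fun y => ?_⟩
  have h5 := Fsum_succ (cOfp n p) ⟨0, hn⟩
  simp only at h5
  have h6 : Fsum (cOfp n p) ((y : ℕ) + 1) ≤ Fsum (cOfp n p) (0 + 1) := Fsum_anti _ (by omega)
  omega

end BijDefs

section Forward
variable {m n k l : ℕ}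

lemma marks_spec (hm : 1 ≤ m) (hn : 1 ≤ n) (hl : l < m) (hk : k = m - l)
    {p : (Fin n → ℕ) × (Fin n → ℕ)} (hp : p ∈ pathVecPairs n k l) :
    ∀ v ∈ marksOf n p, v ≠ 0 ∧ v < m ∧ ∃ y : Fin n, Fsum (cOfp n p) ((y : ℕ) + 1) = v := by
  obtain ⟨htot, hc0, hFm⟩ := path_facts hm hn hl hk hp
  intro v hv
  simp only [marksOf, mem_image, mem_filter, mem_univ, true_and] at hv
  obtain ⟨y, ⟨hy0, hy1⟩, rfl⟩ := hv
  have hcy : 1 ≤ cOfp n p y := by unfold cOfp; omega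
  have h1 := Fsum_succ (cOfp n p) y
  refine ⟨by omega, ?_, attained_shift _ hy0⟩
  have h2 : Fsum (cOfp n p) (y : ℕ) ≤ Fsum (cOfp n p) (0 + 1) := Fsum_anti _ (by omega)
  have h3 := Fsum_succ (cOfp n p) ⟨0, hn⟩
  simp only at h3
  omega

lemma marks_card (hm : 1 ≤ m) (hn : 1 ≤ n) (hl : l < m) (hk : k = m - l)
    {p : (Fin n → ℕ) × (Fin n → ℕ)} (hp : p ∈ pathVecPairs n k l) :
    (marksOf n p).card = k - 1 := by
  obtain ⟨h1, h2, h3, h4⟩ := hp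
  unfold marksOf
  rw [Finset.card_image_of_injOn]
  · rw [← Finset.filter_filter, Finset.card_filter]
    rw [← h3]
    apply Finset.sum_congr rfl
    intro y hy
    simp only [mem_filter, mem_univ, true_and] at hy
    rcases Nat.le_one_iff_eq_zero_or_eq_one.mp (h2 y hy) with h | h
    · simp [h]
    · simp [h]
  · intro y hy y' hy' heq
    simp only [coe_filter, Set.mem_setOf_eq, mem_univ, true_and] at hy hy'
    refine Fsum_inj (cOfp n p) ?_ ?_ heq
    · unfold cOfp; omega
    · unfold cOfp; omega

lemma cnt_pos (hm : 1 ≤ m) (hn : 1 ≤ n) (hl : l < m) (hk : k = m - l)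
    {p : (Fin n → ℕ) × (Fin n → ℕ)} (hp : p ∈ pathVecPairs n k l) :
    ∀ i : Fin m, i ∉ IOf m n p → 1 ≤ cnt m (cOfp n p) i := by
  intro i hi
  simp only [IOf, mem_filter, mem_univ, true_and, not_and, not_not] at hi
  rw [Nat.one_le_iff_ne_zero, ← Nat.pos_iff_ne_zero]
  rw [cnt, Finset.card_pos]
  rcases Nat.eq_zero_or_pos (i : ℕ) with h0 | h0
  · refine ⟨⟨n - 1, by omega⟩, ?_⟩
    simp only [mem_filter, mem_univ, true_and]
    rw [h0, Fsum_of_ge _ (by omega)]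
  · have hv := hi (by omega)
    obtain ⟨-, -, y, hy⟩ := marks_spec hm hn hl hk hp _ hv
    exact ⟨y, by simp only [mem_filter, mem_univ, true_and]; exact hy⟩

lemma card_nonzero (hm : 1 ≤ m) :
    (univ.filter fun i : Fin m => (i : ℕ) ≠ 0).card = m - 1 := by
  have h1 := Finset.card_filter_add_card_filter_not
    (s := (univ : Finset (Fin m))) (p := fun i : Fin m => (i : ℕ) ≠ 0)
  have h2 : (univ.filter fun i : Fin m => ¬ (i : ℕ) ≠ 0) = {⟨0, hm⟩} := by
    ext i
    simp only [mem_filter, mem_univ, true_and, mem_singleton, not_not, Fin.ext_iff]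
  rw [h2, Finset.card_singleton, card_univ, Fintype.card_fin] at h1
  omega

lemma IOf_card (hm : 1 ≤ m) (hn : 1 ≤ n) (hl : l < m) (hk : k = m - l)
    {p : (Fin n → ℕ) × (Fin n → ℕ)} (hp : p ∈ pathVecPairs n k l) :
    (IOf m n p).card = l := by
  have hms := marks_spec hm hn hl hk hp
  have hmc := marks_card hm hn hl hk hp
  have hnz := card_nonzero (m := m) hm
  have hsplit := Finset.card_filter_add_card_filter_not
    (s := univ.filter fun i : Fin m => (i : ℕ) ≠ 0)
    (p := fun i : Fin m => (i : ℕ) ∉ marksOf n p)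
  have hIOf : (IOf m n p) =
      (univ.filter fun i : Fin m => (i : ℕ) ≠ 0).filter
        (fun i : Fin m => (i : ℕ) ∉ marksOf n p) := by
    unfold IOf; rw [Finset.filter_filter]
  have hin : ((univ.filter fun i : Fin m => (i : ℕ) ≠ 0).filter
      (fun i : Fin m => ¬ (i : ℕ) ∉ marksOf n p)).card = (marksOf n p).card := by
    apply Finset.card_bij (fun (i : Fin m) _ => (i : ℕ))
    · intro i hi
      simp only [mem_filter, mem_univ, true_and, not_not] at hi
      exact hi.2
    · intro i hi i' hi' h
      exact Fin.ext h
    · intro v hv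
      obtain ⟨hv0, hvm, -⟩ := hms v hv
      refine ⟨⟨v, hvm⟩, ?_, rfl⟩
      simp only [mem_filter, mem_univ, true_and, not_not]
      exact ⟨hv0, hv⟩
  rw [hin, hmc] at hsplit
  rw [hIOf]
  omega

lemma forward_mem (hm : 1 ≤ m) (hn : 1 ≤ n) (hl : l < m) (hk : k = m - l) (hkn : k ≤ n)
    {p : (Fin n → ℕ) × (Fin n → ℕ)} (hp : p ∈ pathVecPairs n k l) :
    (sOf m n p, IOf m n p) ∈ vecSubsetPairs m n k l := by
  obtain ⟨htot, hc0, hFm⟩ := path_facts hm hn hl hk hp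
  refine ⟨?_, ?_, IOf_card hm hn hl hk hp⟩
  · show ∑ i, sOf m n p i = n - k
    have hcp := cnt_pos hm hn hl hk hp
    have h1 : ∑ i, sOf m n p i + ∑ i : Fin m, (if i ∈ IOf m n p then 0 else 1) =
        ∑ i, cnt m (cOfp n p) i := by
      rw [← Finset.sum_add_distrib]
      apply Finset.sum_congr rfl
      intro i _
      unfold sOf
      by_cases h : i ∈ IOf m n p
      · simp [h]
      · have := hcp i h
        simp only [if_neg h]
        omega
    rw [sum_cnt _ hFm] at h1
    have h2 : ∑ i : Fin m, (if i ∈ IOf m n p then 0 else 1) = m - l := by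
      have : ∑ i : Fin m, (if i ∈ IOf m n p then 0 else 1) =
          (univ.filter fun i : Fin m => i ∉ IOf m n p).card := by
        rw [Finset.card_filter]
        apply Finset.sum_congr rfl
        intro i _
        by_cases h : i ∈ IOf m n p <;> simp [h]
      rw [this]
      have hsp := Finset.card_filter_add_card_filter_not
        (s := (univ : Finset (Fin m))) (p := fun i : Fin m => i ∈ IOf m n p)
      have hI : (univ.filter fun i : Fin m => i ∈ IOf m n p) = IOf m n p := by
        ext i; simp [IOf]
      rw [hI, IOf_card hm hn hl hk hp, card_univ, Fintype.card_fin] at hsp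
      omega
    omega
  · intro i hi
    simp only [IOf, mem_filter, mem_univ, true_and] at hi
    exact hi.1

lemma forward_prop (hm : 1 ≤ m) (hn : 1 ≤ n) (hl : l < m) (hk : k = m - l)
    {p : (Fin n → ℕ) × (Fin n → ℕ)} (hp : p ∈ pathVecPairs n k l) (i : Fin m) :
    sOf m n p i + 1 - (if i ∈ IOf m n p then 1 else 0) = cnt m (cOfp n p) i := by
  have hcp := cnt_pos hm hn hl hk hp i
  unfold sOf
  by_cases h : i ∈ IOf m n p
  · simp [h]
  · have := hcp h
    simp only [if_neg h]
    omega

lemma cnt_eq_filter (p : (Fin n → ℕ) × (Fin n → ℕ)) (i : Fin m) :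
    cnt m (cOfp n p) i = (univ.filter (fun y : Fin n =>
      (∑ t ∈ univ.filter (fun t : Fin n => y < t), (p.1 t + p.2 t)) = (i : ℕ))).card := by
  unfold cnt
  congr 1

lemma a_char (hm : 1 ≤ m) (hn : 1 ≤ n) (hl : l < m) (hk : k = m - l)
    {p : (Fin n → ℕ) × (Fin n → ℕ)} (hp : p ∈ pathVecPairs n k l) (y : Fin n)
    (hy : (y : ℕ) ≠ 0) :
    p.1 y = 1 ↔ (1 ≤ cOfp n p y ∧
      ∀ i ∈ IOf m n p, (i : ℕ) ≠ Fsum (cOfp n p) (y : ℕ)) := by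
  obtain ⟨htot, hc0, hFm⟩ := path_facts hm hn hl hk hp
  obtain ⟨h1, h2, h3, h4⟩ := hp
  constructor
  · intro ha
    have hcy : 1 ≤ cOfp n p y := by unfold cOfp; omega
    refine ⟨hcy, fun i hi => ?_⟩
    simp only [IOf, mem_filter, mem_univ, true_and] at hi
    intro hcon
    apply hi.2
    rw [hcon]
    simp only [marksOf, mem_image, mem_filter, mem_univ, true_and]
    exact ⟨y, ⟨hy, ha⟩, rfl⟩
  · rintro ⟨hcy, hP⟩
    have hv1 : 1 ≤ Fsum (cOfp n p) (y : ℕ) := by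
      have := Fsum_succ (cOfp n p) y
      omega
    have hvm : Fsum (cOfp n p) (y : ℕ) < m := by
      have h5 : Fsum (cOfp n p) (y : ℕ) ≤ Fsum (cOfp n p) (0 + 1) := Fsum_anti _ (by omega)
      have h6 := Fsum_succ (cOfp n p) ⟨0, hn⟩
      simp only at h6
      omega
    set v := Fsum (cOfp n p) (y : ℕ) with hvdef
    have hnotI : (⟨v, hvm⟩ : Fin m) ∉ IOf m n p := fun hmem => hP _ hmem rfl
    simp only [IOf, mem_filter, mem_univ, true_and, not_and, not_not] at hnotI
    have hvmarks : v ∈ marksOf n p := hnotI (by omega)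
    simp only [marksOf, mem_image, mem_filter, mem_univ, true_and] at hvmarks
    obtain ⟨y', ⟨hy'0, hy'1⟩, hy'v⟩ := hvmarks
    have hcy' : 1 ≤ cOfp n p y' := by unfold cOfp; omega
    have : y' = y := Fsum_inj (cOfp n p) hcy' hcy hy'v
    rw [← this]
    exact hy'1

lemma forward_inj (hm : 1 ≤ m) (hn : 1 ≤ n) (hl : l < m) (hk : k = m - l)
    {p p' : (Fin n → ℕ) × (Fin n → ℕ)} (hp : p ∈ pathVecPairs n k l)
    (hp' : p' ∈ pathVecPairs n k l) (hs : sOf m n p = sOf m n p')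
    (hI : IOf m n p = IOf m n p') : p = p' := by
  obtain ⟨htot, hc0, hFm⟩ := path_facts hm hn hl hk hp
  obtain ⟨htot', hc0', hFm'⟩ := path_facts hm hn hl hk hp'
  have hcnt : cnt m (cOfp n p) = cnt m (cOfp n p') := by
    funext i
    rw [← forward_prop hm hn hl hk hp i, ← forward_prop hm hn hl hk hp' i, hs, hI]
  have hFsum : ∀ j : ℕ, j ≤ n → Fsum (cOfp n p) j = Fsum (cOfp n p') j := by
    intro j hj
    rw [← Hval_cnt (cOfp n p) hFm htot hj, ← Hval_cnt (cOfp n p') hFm' htot' hj, hcnt]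
  have hc : cOfp n p = cOfp n p' := by
    funext y
    have e1 := Fsum_succ (cOfp n p) y
    have e2 := Fsum_succ (cOfp n p') y
    have e3 := hFsum (y : ℕ) (by omega)
    have e4 := hFsum ((y : ℕ) + 1) (by omega)
    omega
  have ha : p.1 = p'.1 := by
    funext y
    by_cases hy : (y : ℕ) = 0
    · rw [hp.1 y hy, hp'.1 y hy]
    · have e1 := a_char hm hn hl hk hp y hy
      have e2 := a_char hm hn hl hk hp' y hy
      rw [hc, hI] at e1
      have b1 := hp.2.1 y hy
      have b2 := hp'.2.1 y hy
      rcases Nat.le_one_iff_eq_zero_or_eq_one.mp b1 with h | h <;>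
        rcases Nat.le_one_iff_eq_zero_or_eq_one.mp b2 with h' | h'
      · rw [h, h']
      · rw [h] at e1; rw [h'] at e2; exact absurd (e1.mpr (e2.mp rfl)) (by omega)
      · rw [h'] at e2; rw [h] at e1; exact absurd (e2.mpr (e1.mp rfl)) (by omega)
      · rw [h, h']
  have hr : p.2 = p'.2 := by
    funext y
    have e1 : cOfp n p y = cOfp n p' y := by rw [hc]
    have e2 : p.1 y = p'.1 y := by rw [ha]
    unfold cOfp at e1
    omega
  exact Prod.ext ha hr

end Forward

section Inverse
variable {m n k l : ℕ}

lemma count_facts (hm : 1 ≤ m) (hn : 1 ≤ n) (hl : l < m) (hk : k = m - l) (hkn : k ≤ n)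
    {q : (Fin m → ℕ) × Finset (Fin m)} (hq : q ∈ vecSubsetPairs m n k l) :
    Fsum (countOf m q) 0 = n ∧ 1 ≤ countOf m q ⟨0, hm⟩ := by
  obtain ⟨h1, h2, h3⟩ := hq
  constructor
  · rw [Fsum_zero]
    unfold countOf
    rw [Finset.sum_add_distrib, h1]
    have hsum : ∑ i : Fin m, (if i ∈ q.2 then 0 else 1) = m - l := by
      have e1 : ∑ i : Fin m, (if i ∈ q.2 then 0 else 1) =
          (univ.filter fun i : Fin m => i ∉ q.2).card := by
        rw [Finset.card_filter]
        apply Finset.sum_congr rfl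
        intro i _
        by_cases h : i ∈ q.2 <;> simp [h]
      have hsp := Finset.card_filter_add_card_filter_not
        (s := (univ : Finset (Fin m))) (p := fun i : Fin m => i ∈ q.2)
      have hq2 : (univ.filter fun i : Fin m => i ∈ q.2) = q.2 := by
        ext i; simp
      rw [hq2, h3, card_univ, Fintype.card_fin] at hsp
      omega
    rw [hsum]
    omega
  · unfold countOf
    have h0 : (⟨0, hm⟩ : Fin m) ∉ q.2 := fun hmem => h2 _ hmem rfl
    simp [h0]

lemma cInv_facts (hm : 1 ≤ m) (hn : 1 ≤ n) (hl : l < m) (hk : k = m - l) (hkn : k ≤ n)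
    {q : (Fin m → ℕ) × Finset (Fin m)} (hq : q ∈ vecSubsetPairs m n k l) :
    (∀ j : ℕ, j ≤ n → Fsum (cInv m n q) j = Hval (countOf m q) j) ∧
      cnt m (cInv m n q) = countOf m q ∧
      Fsum (cInv m n q) 0 = m ∧ 1 ≤ cInv m n q ⟨0, hn⟩ ∧
      (∀ y : Fin n, Fsum (cInv m n q) ((y : ℕ) + 1) < m) := by
  obtain ⟨htc, hc0⟩ := count_facts hm hn hl hk hkn hq
  have hF := Fsum_cVec (countOf m q) hm htc hc0
  have hC := cnt_cVec (countOf m q) hm htc hc0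
  have hH1 : Hval (countOf m q) 1 ≤ m - 1 := by
    have hsub : (univ.filter fun i : Fin m => 1 ≤ Fsum (countOf m q) ((i : ℕ) + 1)) ⊆
        univ.erase ⟨m - 1, by omega⟩ := by
      intro i hi
      simp only [mem_filter, mem_univ, true_and] at hi
      rw [Finset.mem_erase]
      refine ⟨?_, mem_univ i⟩
      intro hcon
      rw [hcon] at hi
      have : Fsum (countOf m q) ((m - 1 : ℕ) + 1) = 0 := Fsum_of_ge _ (by omega)
      simp only at hi
      omega
    have := Finset.card_le_card hsub
    rw [Finset.card_erase_of_mem (mem_univ _), card_univ, Fintype.card_fin] at this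
    exact this
  have hH0 : Hval (countOf m q) 0 = m := Hval_zero _
  have hH1' : Hval (countOf m q) (0 + 1) ≤ m - 1 := by simpa using hH1
  have hci : cInv m n q = cVec n (countOf m q) := rfl
  refine ⟨hF, hC, ?_, ?_, ?_⟩
  · rw [hci, hF 0 (by omega), hH0]
  · rw [hci]
    show 1 ≤ cVec n (countOf m q) ⟨0, hn⟩
    unfold cVec
    simp only
    omega
  · intro y
    rw [hci, hF ((y : ℕ) + 1) (by omega)]
    have := Hval_anti (countOf m q) (show (1:ℕ) ≤ (y : ℕ) + 1 by omega)
    omega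

lemma aInv_one_iff (hm : 1 ≤ m) (hn : 1 ≤ n) (hl : l < m) (hk : k = m - l) (hkn : k ≤ n)
    {q : (Fin m → ℕ) × Finset (Fin m)} (hq : q ∈ vecSubsetPairs m n k l) (y : Fin n)
    (hy : (y : ℕ) ≠ 0) :
    aInv m n q y = 1 ↔ (1 ≤ cInv m n q y ∧
      ∀ i ∈ q.2, (i : ℕ) ≠ Fsum (cInv m n q) (y : ℕ)) := by
  obtain ⟨hF, hC, htot, hc0, hFm⟩ := cInv_facts hm hn hl hk hkn hq
  have hH : Hval (countOf m q) (y : ℕ) = Fsum (cInv m n q) (y : ℕ) := (hF _ (by omega)).symm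
  unfold aInv
  rw [if_neg hy]
  by_cases h : 0 < cInv m n q y ∧ ∀ i ∈ q.2, (i : ℕ) ≠ Hval (countOf m q) (y : ℕ)
  · rw [if_pos h, hH] at *
    simp only [true_iff]
    exact ⟨h.1, h.2⟩
  · rw [if_neg h, hH] at *
    constructor
    · intro h0; omega
    · intro hcon; exact absurd ⟨hcon.1, hcon.2⟩ h

lemma sum_aInv (hm : 1 ≤ m) (hn : 1 ≤ n) (hl : l < m) (hk : k = m - l) (hkn : k ≤ n)
    {q : (Fin m → ℕ) × Finset (Fin m)} (hq : q ∈ vecSubsetPairs m n k l) :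
    (∑ y ∈ univ.filter (fun y : Fin n => (y : ℕ) ≠ 0), aInv m n q y) = k - 1 := by
  obtain ⟨hF, hC, htot, hc0, hFm⟩ := cInv_facts hm hn hl hk hkn hq
  have hchar := aInv_one_iff hm hn hl hk hkn hq
  set c := cInv m n q with hcdef
  -- the sum is a cardinality
  have hstep1 : (∑ y ∈ univ.filter (fun y : Fin n => (y : ℕ) ≠ 0), aInv m n q y) =
      (univ.filter (fun y : Fin n => (y : ℕ) ≠ 0 ∧ aInv m n q y = 1)).card := by
    rw [← Finset.filter_filter, Finset.card_filter]
    apply Finset.sum_congr rfl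
    intro y hy
    simp only [mem_filter, mem_univ, true_and] at hy
    unfold aInv
    rw [if_neg hy]
    by_cases h : 0 < cInv m n q y ∧ ∀ i ∈ q.2, (i : ℕ) ≠ Hval (countOf m q) (y : ℕ) <;>
      simp [h]
  set A' := univ.filter (fun y : Fin n => (y : ℕ) ≠ 0 ∧ aInv m n q y = 1) with hA'
  set B := univ.filter (fun i : Fin m => (i : ℕ) ≠ 0 ∧ 1 ≤ countOf m q i) with hB
  have hmemA : ∀ y ∈ A', (y : ℕ) ≠ 0 ∧ 1 ≤ c y ∧ ∀ i ∈ q.2, (i : ℕ) ≠ Fsum c (y : ℕ) := by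
    intro y hy
    simp only [hA', mem_filter, mem_univ, true_and] at hy
    obtain ⟨hy0, hy1⟩ := hy
    obtain ⟨hc1, hc2⟩ := (hchar y hy0).mp hy1
    exact ⟨hy0, hc1, hc2⟩
  have hbnd : ∀ y ∈ A', Fsum c (y : ℕ) < m := by
    intro y hy
    have h5 : Fsum c (y : ℕ) ≤ Fsum c (0 + 1) := Fsum_anti _ (by have := (hmemA y hy).1; omega)
    have h6 := hFm ⟨0, hn⟩
    simp only at h6
    omega
  have hstep2 : A'.card = (B \ q.2).card := by
    apply Finset.card_bij (fun (y : Fin n) (hy : y ∈ A') => (⟨Fsum c (y : ℕ), hbnd y hy⟩ : Fin m))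
    · intro y hy
      obtain ⟨hy0, hc1, hc2⟩ := hmemA y hy
      have hv1 : 1 ≤ Fsum c (y : ℕ) := by
        have := Fsum_succ c y; omega
      rw [Finset.mem_sdiff]
      constructor
      · simp only [hB, mem_filter, mem_univ, true_and]
        refine ⟨by simp; omega, ?_⟩
        rw [← hC]
        obtain ⟨y', hy'⟩ := attained_shift c hy0
        rw [show cnt m c ⟨Fsum c (y : ℕ), hbnd y hy⟩ =
          (univ.filter fun t : Fin n => Fsum c ((t : ℕ) + 1) = Fsum c (y : ℕ)).card from rfl]
        rw [Nat.one_le_iff_ne_zero, ← Nat.pos_iff_ne_zero, Finset.card_pos]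
        exact ⟨y', by simp only [mem_filter, mem_univ, true_and]; exact hy'⟩
      · intro hcon
        exact hc2 _ hcon rfl
    · intro y hy y' hy' heq
      have e := Fin.mk.injEq _ _ _ _ ▸ heq
      exact Fsum_inj c (hmemA y hy).2.1 (hmemA y' hy').2.1 e
    · intro b hb
      rw [Finset.mem_sdiff] at hb
      obtain ⟨hbB, hbq⟩ := hb
      simp only [hB, mem_filter, mem_univ, true_and] at hbB
      obtain ⟨hb0, hb1⟩ := hbB
      rw [← hC] at hb1
      have hfib : ∃ y₀ : Fin n, Fsum c ((y₀ : ℕ) + 1) = (b : ℕ) := by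
        rw [show cnt m c b =
          (univ.filter fun t : Fin n => Fsum c ((t : ℕ) + 1) = (b : ℕ)).card from rfl] at hb1
        have hpos : 0 < (univ.filter fun t : Fin n =>
            Fsum c ((t : ℕ) + 1) = (b : ℕ)).card := by omega
        obtain ⟨y₀, hy₀⟩ := Finset.card_pos.mp hpos
        simp only [mem_filter, mem_univ, true_and] at hy₀
        exact ⟨y₀, hy₀⟩
      obtain ⟨y, hy0, hyc, hyv⟩ := attained_exists c hb0 hfib
      have hyA : y ∈ A' := by
        simp only [hA', mem_filter, mem_univ, true_and]
        refine ⟨hy0, (hchar y hy0).mpr ⟨hyc, ?_⟩⟩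
        intro i hi hcon
        rw [hyv] at hcon
        have : i = b := Fin.ext hcon
        rw [this] at hi
        exact hbq hi
      exact ⟨y, hyA, Fin.ext (by simp only; omega)⟩
  -- count (B \ q.2)
  obtain ⟨hq1, hq2, hq3⟩ := hq
  have hq2nz : q.2 ⊆ univ.filter (fun i : Fin m => (i : ℕ) ≠ 0) := by
    intro i hi; simp only [mem_filter, mem_univ, true_and]; exact hq2 i hi
  have hBnz : B ⊆ univ.filter (fun i : Fin m => (i : ℕ) ≠ 0) := by
    intro i hi; simp only [hB, mem_filter, mem_univ, true_and] at hi ⊢; exact hi.1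
  have hnzB : (univ.filter (fun i : Fin m => (i : ℕ) ≠ 0)) \ B ⊆ q.2 := by
    intro i hi
    rw [Finset.mem_sdiff] at hi
    obtain ⟨hi1, hi2⟩ := hi
    simp only [mem_filter, mem_univ, true_and] at hi1
    simp only [hB, mem_filter, mem_univ, true_and, not_and] at hi2
    have := hi2 hi1
    unfold countOf at this
    by_contra hcon
    rw [if_neg hcon] at this
    omega
  have hqB : q.2 \ B = (univ.filter (fun i : Fin m => (i : ℕ) ≠ 0)) \ B := by
    apply Finset.Subset.antisymm
    · exact Finset.sdiff_subset_sdiff hq2nz (le_refl _)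
    · intro i hi
      rw [Finset.mem_sdiff] at hi ⊢
      exact ⟨hnzB (Finset.mem_sdiff.mpr hi), hi.2⟩
  have e1 := Finset.card_sdiff_add_card_inter B q.2
  have e2 := Finset.card_inter_add_card_sdiff q.2 B
  have e3 := Finset.card_sdiff_add_card_eq_card hBnz
  have e4 : (q.2 \ B).card = ((univ.filter (fun i : Fin m => (i : ℕ) ≠ 0)) \ B).card := by
    rw [hqB]
  have e5 : B ∩ q.2 = q.2 ∩ B := Finset.inter_comm _ _
  rw [e5] at e1
  rw [card_nonzero hm] at e3
  rw [hq3] at e2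
  rw [hstep1, hstep2]
  omega

lemma aInv_le_c (hm : 1 ≤ m) (hn : 1 ≤ n) (hl : l < m) (hk : k = m - l) (hkn : k ≤ n)
    {q : (Fin m → ℕ) × Finset (Fin m)} (hq : q ∈ vecSubsetPairs m n k l) (y : Fin n) :
    aInv m n q y ≤ cInv m n q y := by
  obtain ⟨hF, hC, htot, hc0, hFm⟩ := cInv_facts hm hn hl hk hkn hq
  unfold aInv
  by_cases hy : (y : ℕ) = 0
  · rw [if_pos hy]
    have : y = ⟨0, hn⟩ := Fin.ext hy
    rw [this]
    exact hc0
  · rw [if_neg hy]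
    split_ifs with h
    · exact h.1
    · omega

lemma cOfp_inv (hm : 1 ≤ m) (hn : 1 ≤ n) (hl : l < m) (hk : k = m - l) (hkn : k ≤ n)
    {q : (Fin m → ℕ) × Finset (Fin m)} (hq : q ∈ vecSubsetPairs m n k l) :
    cOfp n (aInv m n q, rInv m n q) = cInv m n q := by
  funext y
  have := aInv_le_c hm hn hl hk hkn hq y
  unfold cOfp rInv
  simp only
  omega

lemma inverse_mem (hm : 1 ≤ m) (hn : 1 ≤ n) (hl : l < m) (hk : k = m - l) (hkn : k ≤ n)
    {q : (Fin m → ℕ) × Finset (Fin m)} (hq : q ∈ vecSubsetPairs m n k l) :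
    (aInv m n q, rInv m n q) ∈ pathVecPairs n k l := by
  obtain ⟨hF, hC, htot, hc0, hFm⟩ := cInv_facts hm hn hl hk hkn hq
  have hsumA := sum_aInv hm hn hl hk hkn hq
  refine ⟨fun y hy => ?_, fun y hy => ?_, hsumA, ?_⟩
  · show aInv m n q y = 1
    unfold aInv; rw [if_pos hy]
  · show aInv m n q y ≤ 1
    unfold aInv; rw [if_neg hy]; split_ifs <;> omega
  · show ∑ y, rInv m n q y = l
    have e1 : ∑ y, rInv m n q y + ∑ y, aInv m n q y = ∑ y, cInv m n q y := by
      rw [← Finset.sum_add_distrib]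
      apply Finset.sum_congr rfl
      intro y _
      have := aInv_le_c hm hn hl hk hkn hq y
      unfold rInv
      omega
    have e2 : ∑ y, cInv m n q y = m := by rw [← Fsum_zero, htot]
    have e3 : ∑ y, aInv m n q y = 1 + (k - 1) := by
      have hsplit := Finset.sum_filter_add_sum_filter_not univ
        (fun y : Fin n => (y : ℕ) ≠ 0) (aInv m n q)
      have h4 : (univ.filter fun y : Fin n => ¬ (y : ℕ) ≠ 0) = {⟨0, hn⟩} := by
        ext y
        simp only [mem_filter, mem_univ, true_and, mem_singleton, not_not, Fin.ext_iff]
      have h5 : aInv m n q ⟨0, hn⟩ = 1 := by unfold aInv; rw [if_pos rfl]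
      rw [h4, Finset.sum_singleton, h5, hsumA] at hsplit
      omega
    have hk1 : 1 ≤ k := by omega
    omega

lemma forward_of_inverse (hm : 1 ≤ m) (hn : 1 ≤ n) (hl : l < m) (hk : k = m - l) (hkn : k ≤ n)
    {q : (Fin m → ℕ) × Finset (Fin m)} (hq : q ∈ vecSubsetPairs m n k l) :
    sOf m n (aInv m n q, rInv m n q) = q.1 ∧ IOf m n (aInv m n q, rInv m n q) = q.2 := by
  obtain ⟨hF, hC, htot, hc0, hFm⟩ := cInv_facts hm hn hl hk hkn hq
  have hchar := aInv_one_iff hm hn hl hk hkn hq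
  have hco := cOfp_inv hm hn hl hk hkn hq
  set c := cInv m n q with hcdef
  have hq2 := hq.2.1
  have hIOf : IOf m n (aInv m n q, rInv m n q) = q.2 := by
    ext i
    simp only [IOf, mem_filter, mem_univ, true_and, marksOf, mem_image, not_exists]
    rw [hco]
    constructor
    · rintro ⟨hi0, hmark⟩
      by_contra hiq
      have hcnt1 : 1 ≤ cnt m c i := by
        rw [hC]
        unfold countOf
        rw [if_neg hiq]
        omega
      have hfib : ∃ y₀ : Fin n, Fsum c ((y₀ : ℕ) + 1) = (i : ℕ) := by
        have hpos : 0 < (univ.filter fun t : Fin n =>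
            Fsum c ((t : ℕ) + 1) = (i : ℕ)).card := hcnt1
        obtain ⟨y₀, hy₀⟩ := Finset.card_pos.mp hpos
        simp only [mem_filter, mem_univ, true_and] at hy₀
        exact ⟨y₀, hy₀⟩
      obtain ⟨y, hy0, hyc, hyv⟩ := attained_exists c hi0 hfib
      have ha1 : aInv m n q y = 1 := by
        refine (hchar y hy0).mpr ⟨hyc, fun i' hi' hcon => ?_⟩
        rw [hyv] at hcon
        have : i' = i := Fin.ext hcon
        rw [this] at hi'
        exact hiq hi'
      exact hmark y ⟨⟨hy0, ha1⟩, hyv⟩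
    · intro hiq
      refine ⟨hq2 i hiq, ?_⟩
      intro y hy
      obtain ⟨⟨hy0, hy1⟩, hyv⟩ := hy
      obtain ⟨-, hP⟩ := (hchar y hy0).mp hy1
      exact hP i hiq hyv.symm
  refine ⟨?_, hIOf⟩
  funext i
  unfold sOf
  rw [hco, hC, hIOf]
  unfold countOf
  by_cases h : i ∈ q.2
  · simp [h]
  · simp [h]

end Inverse

/-- The two index sets of the proof of Theorem 4.1 are in bijection: both encode an
admissible path `γ` from `(0,n)` to `(m,0)` (with `k−1` marked east-south corners);
the path determined by the horizontal-run vector `a + r` has vertical run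
`s_i + 1 − (ε_I)_i` on the line `x = i`.  Moreover
`Σ_{|s|=n−k} Σ_{I⊆[2,m],|I|=l} x^{s+(1^m)−ε_I} = x₁⋯x_m · h_{n−k}(x) · e_l(x₂⁻¹,…,x_m⁻¹)`. -/
theorem extended_delta_stmt15 (m n k l : ℕ) (hm : 1 ≤ m) (hn : 1 ≤ n)
    (hl : l < m) (hk : k = m - l) (hkn : k ≤ n) :
    (∃ e : pathVecPairs n k l ≃ vecSubsetPairs m n k l,
      ∀ (p : pathVecPairs n k l) (i : Fin m),
        (e p).val.1 i + 1 - (if i ∈ (e p).val.2 then 1 else 0) =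
          (Finset.univ.filter (fun y : Fin n =>
            (∑ t ∈ Finset.univ.filter (fun t : Fin n => y < t),
              (p.val.1 t + p.val.2 t)) = (i : ℕ))).card) ∧
    (∀ (K : Type) [Field K] (x : Fin m → K), (∀ i, x i ≠ 0) →
      ∑ s ∈ Finset.Nat.antidiagonalTuple m (n - k),
        ∑ I ∈ Finset.powersetCard l (Finset.univ.filter (fun i : Fin m => (i : ℕ) ≠ 0)),
          ∏ i, x i ^ (s i + 1 - (if i ∈ I then 1 else 0)) =
      (∏ i, x i) *
        (∑ s ∈ Finset.Nat.antidiagonalTuple m (n - k), ∏ i, x i ^ s i) *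
        (∑ I ∈ Finset.powersetCard l (Finset.univ.filter (fun i : Fin m => (i : ℕ) ≠ 0)),
          ∏ i ∈ I, (x i)⁻¹)) := by
  constructor
  · -- Part 1: the bijection
    have hbij : Function.Bijective (fun p : pathVecPairs n k l =>
        (⟨(sOf m n p.val, IOf m n p.val), forward_mem hm hn hl hk hkn p.property⟩ :
          vecSubsetPairs m n k l)) := by
      constructor
      · intro p p' h
        apply Subtype.ext
        have h1 := congrArg (fun q : vecSubsetPairs m n k l => q.val.1) h
        have h2 := congrArg (fun q : vecSubsetPairs m n k l => q.val.2) h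
        simp only at h1 h2
        exact forward_inj hm hn hl hk p.property p'.property h1 h2
      · intro q
        refine ⟨⟨(aInv m n q.val, rInv m n q.val), inverse_mem hm hn hl hk hkn q.property⟩, ?_⟩
        apply Subtype.ext
        obtain ⟨e1, e2⟩ := forward_of_inverse hm hn hl hk hkn q.property
        simp only
        rw [e1, e2]
    refine ⟨Equiv.ofBijective _ hbij, fun p i => ?_⟩
    show sOf m n p.val i + 1 - (if i ∈ IOf m n p.val then 1 else 0) = _
    rw [forward_prop hm hn hl hk p.property i, cnt_eq_filter p.val i]
  · -- Part 2: the monomial identity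
    intro K _ x hx
    have key : ∀ (s : Fin m → ℕ) (I : Finset (Fin m)),
        (∏ i, x i ^ (s i + 1 - (if i ∈ I then 1 else 0))) =
        ((∏ i, x i) * ∏ i, x i ^ s i) * ∏ i ∈ I, (x i)⁻¹ := by
      intro s I
      have h1 : ∀ i : Fin m, x i ^ (s i + 1 - (if i ∈ I then 1 else 0)) =
          x i * x i ^ s i * (if i ∈ I then (x i)⁻¹ else 1) := by
        intro i
        by_cases h : i ∈ I
        · simp only [if_pos h]
          have : s i + 1 - 1 = s i := by omega
          rw [this, mul_comm (x i) (x i ^ s i), mul_assoc,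
            mul_inv_cancel₀ (hx i), mul_one]
        · simp only [if_neg h]
          rw [Nat.sub_zero, pow_succ, mul_one]
          ring
      rw [Finset.prod_congr rfl (fun i _ => h1 i), Finset.prod_mul_distrib,
        Finset.prod_mul_distrib]
      congr 1
      rw [← Finset.prod_filter]
      congr 1
      ext i
      simp
    have step1 : ∀ s ∈ Finset.Nat.antidiagonalTuple m (n - k),
        (∑ I ∈ Finset.powersetCard l (Finset.univ.filter (fun i : Fin m => (i : ℕ) ≠ 0)),
          ∏ i, x i ^ (s i + 1 - (if i ∈ I then 1 else 0))) =
        ((∏ i, x i) * ∏ i, x i ^ s i) *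
          ∑ I ∈ Finset.powersetCard l (Finset.univ.filter (fun i : Fin m => (i : ℕ) ≠ 0)),
            ∏ i ∈ I, (x i)⁻¹ := by
      intro s _
      rw [Finset.mul_sum]
      exact Finset.sum_congr rfl (fun I _ => key s I)
    rw [Finset.sum_congr rfl step1, ← Finset.sum_mul, ← Finset.mul_sum]
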